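/- Let F be a downset in J(n,q) (i.e., if u, v ∈ J(n,q), v ∈ F and u ≤ v componentwise, then u ∈ F). For g ∈ I(n,q) with i(g) ∉ F, define I_1(g) = {1,...,g_1 − 1} and I_j(g) = {g_{j−1},...,g_j − 1} for 2 ≤ j ≤ n, and f_g(x) = ∏_{j=1}^n ∏_{t ∈ i(I_j(g))} (x_j − t). Then f_g vanishes at every point of F. -/

import Mathlib

theorem stmt_19 {K : Type*} [Field K] (n q : ℕ) (hn : 1 ≤ n) (hq : 1 ≤ q)
    (i : Fin q → K) (hi : Function.Injective i)
    (𝓕 : Set (Fin n → Fin q)) (h𝓕 : ∀ f ∈ 𝓕, Monotone f)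
    (hdown : ∀ u v : Fin n → Fin q, Monotone u → v ∈ 𝓕 → u ≤ v → u ∈ 𝓕)
    (g : Fin n → Fin q) (hg : Monotone g) (hgF : g ∉ 𝓕)
    (v : Fin n → Fin q) (hv : v ∈ 𝓕) :
    MvPolynomial.eval (fun j => i (v j))
      (∏ j : Fin n, ∏ t ∈ Finset.univ.filter
        (fun t : Fin q =>
          ((0 < j.val) →
            g ⟨j.val - 1, Nat.lt_of_le_of_lt (Nat.sub_le j.val 1) j.isLt⟩ ≤ t) ∧
          t < g j),
        (MvPolynomial.X j - MvPolynomial.C (i t))) = 0 := by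
  classical
  have hvm : Monotone v := h𝓕 v hv
  have hne : ¬ g ≤ v := fun h => hgF (hdown g v hg hv h)
  rw [Pi.le_def] at hne
  push_neg at hne
  obtain ⟨j₁, hj₁⟩ := hne
  have hS : (Finset.univ.filter (fun j : Fin n => v j < g j)).Nonempty :=
    ⟨j₁, by simp [hj₁]⟩
  obtain ⟨j₀, hj₀mem, hj₀min⟩ := Finset.exists_min_image _ id hS
  rw [Finset.mem_filter] at hj₀mem
  have hlt : v j₀ < g j₀ := hj₀mem.2
  rw [map_prod]
  apply Finset.prod_eq_zero (Finset.mem_univ j₀)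
  rw [map_prod]
  have hmem : v j₀ ∈ Finset.univ.filter
      (fun t : Fin q =>
        ((0 < j₀.val) →
          g ⟨j₀.val - 1, Nat.lt_of_le_of_lt (Nat.sub_le j₀.val 1) j₀.isLt⟩ ≤ t) ∧
        t < g j₀) := by
    rw [Finset.mem_filter]
    refine ⟨Finset.mem_univ _, ?_, hlt⟩
    intro hpos
    set j' : Fin n := ⟨j₀.val - 1, Nat.lt_of_le_of_lt (Nat.sub_le j₀.val 1) j₀.isLt⟩
    have hj'lt : j' < j₀ := by
      simp only [Fin.lt_def]
      exact Nat.sub_lt hpos one_pos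
    have hj'notS : ¬ v j' < g j' := by
      intro h
      have := hj₀min j' (Finset.mem_filter.mpr ⟨Finset.mem_univ _, h⟩)
      simp only [id] at this
      exact absurd hj'lt (not_lt.mpr this)
    exact le_trans (not_lt.mp hj'notS) (hvm hj'lt.le)
  apply Finset.prod_eq_zero hmem
  simp
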